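/- Let S be any semigroup and x ∈ S an element satisfying x² = x³ (so that x² is an idempotent). Then for every finite-dimensional complex representation φ of S one has χ_φ(x) = χ_φ(x²); that is, x ≡ x². In particular, in the semigroup ⟨x : x² = x³⟩ the elements x and x² are conjugate in the character sense but not conjugate, so the equivalence of ∼ and ≡ fails for non-regular semigroups. -/

import Mathlib

universe u

namespace SgConjPaper

/-- `spow x n = x^(n+1)`: positive powers of an element of a semigroup. -/
def spow {S : Type*} [Semigroup S] (x : S) : ℕ → S
  | 0 => x
  | n + 1 => spow x n * x

/-- `a` lies in the maximal subgroup of `S` whose identity is the idempotent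
`e` (i.e. `e` is a two-sided identity for `a` and `a` is invertible over `e`). -/
def InMaxSubgroup {S : Type*} [Semigroup S] (e a : S) : Prop :=
  e * a = a ∧ a * e = a ∧ ∃ b : S, e * b = b ∧ b * e = b ∧ a * b = e ∧ b * a = e

/-- `e` is the idempotent `e_x`: the identity of the maximal subgroup
containing some positive power of `x`. -/
def IsEIdem {S : Type*} [Semigroup S] (x e : S) : Prop :=
  ∃ k : ℕ, InMaxSubgroup e (spow x k)

/-- A semigroup is group-bound if some positive power of every element lies
in a subgroup. -/
def GroupBound (S : Type*) [Semigroup S] : Prop := ∀ x : S, ∃ e : S, IsEIdem x e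

/-- Primary conjugacy: `x = uv`, `y = vu` for some `u, v ∈ S¹`. -/
def PrimConj {S : Type*} [Semigroup S] (x y : S) : Prop :=
  ∃ u v : WithOne S, (x : WithOne S) = u * v ∧ (y : WithOne S) = v * u

/-- Conjugacy `∼`: the transitive closure of primary conjugacy. -/
def SgConj {S : Type*} [Semigroup S] : S → S → Prop := Relation.TransGen PrimConj

/-- Conjugacy in the character sense `≡`: equal traces under every
finite-dimensional complex representation. -/
def CharEq {S : Type*} [Semigroup S] (x y : S) : Prop :=
  ∀ (V : Type) (_ : AddCommGroup V) (_ : Module ℂ V) (_ : FiniteDimensional ℂ V)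
    (φ : S →ₙ* Module.End ℂ V),
    LinearMap.trace ℂ V (φ x) = LinearMap.trace ℂ V (φ y)

/-- A semigroup is regular if for every `a` there is `b` with `a = aba`. -/
def Regular (S : Type*) [Semigroup S] : Prop := ∀ a : S, ∃ b : S, a * b * a = a

/-- The monogenic semigroup `⟨x : x² = x³⟩`, whose two distinct elements are
`x` and `x²` (so that all products equal `x²`). -/
inductive M5 : Type
  | x : M5
  | xsq : M5
deriving DecidableEq

instance : Semigroup M5 where
  mul _ _ := M5.xsq
  mul_assoc _ _ _ := rfl


lemma charEq_aux {S : Type*} [Semigroup S] (x : S) (h : x * x = x * x * x) :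
    CharEq x (x * x) := by
  intro V _ _ _ φ
  set A : Module.End ℂ V := φ x with hA
  have hmul : φ (x * x) = A * A := map_mul φ x x
  have h3 : A * A = A * A * A := by
    have := congrArg φ h
    rwa [map_mul, map_mul, map_mul, ← hA] at this
  have h4 : A * A * (A * A) = A * A := by
    rw [← mul_assoc, ← h3, ← h3]
  have hnil : IsNilpotent (A - A * A) := by
    refine ⟨2, ?_⟩
    calc (A - A * A) ^ 2
        = A * A - A * (A * A) - A * A * A + A * A * (A * A) := by noncomm_ring
      _ = 0 := by rw [← mul_assoc, ← h3, h4]; abel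
  have htr : LinearMap.trace ℂ V (A - A * A) = 0 :=
    (LinearMap.isNilpotent_trace_of_isNilpotent hnil).eq_zero
  rw [map_sub] at htr
  rw [hmul]
  exact sub_eq_zero.mp htr

lemma primConj_M5_x {b : M5} (h : PrimConj M5.x b) : b = M5.x := by
  obtain ⟨u, v, h1, h2⟩ := h
  induction u using WithOne.cases_on
  · rw [one_mul] at h1
    rw [← h1, mul_one] at h2
    exact WithOne.coe_inj.mp h2
  · induction v using WithOne.cases_on
    · intro h2
      rw [mul_one] at h1
      rw [one_mul, ← h1] at h2
      exact WithOne.coe_inj.mp h2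
    · intro h1 _
      rw [← WithOne.coe_mul] at h1
      have hx : M5.x = _ * _ := WithOne.coe_inj.mp h1
      exact absurd hx (by intro hh; cases hh)

/-- if `x² = x³` in a semigroup `S` then `x ≡ x²`; in
particular in `⟨x : x² = x³⟩` the elements `x` and `x²` are conjugate in the
character sense but not conjugate, so the equivalence of `∼` and `≡` fails
for non-regular semigroups. -/
theorem charEq_of_sq_eq_cube :
    (∀ (S : Type u) (_ : Semigroup S) (x : S), x * x = x * x * x → CharEq x (x * x)) ∧
    (CharEq M5.x (M5.x * M5.x) ∧ ¬ SgConj M5.x (M5.x * M5.x)) := by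
  constructor
  · intro S _ x h
    exact charEq_aux x h
  constructor
  · exact charEq_aux M5.x rfl
  · intro h
    have key : ∀ b : M5, SgConj M5.x b → b = M5.x := by
      intro b hb
      induction hb with
      | single h1 => exact primConj_M5_x h1
      | tail _ h2 ih => exact primConj_M5_x (ih ▸ h2)
    exact absurd (key _ h) (by decide)


end SgConjPaper
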